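/- Let A ∈ M(2n−1,ℝ) satisfy A ≠ 0 and A² = 0 (so that the almost abelian Lie algebra 𝔤_A = ℝe₀ ⋉_A ℝ^{2n−1} is 2-step nilpotent). Then 𝔤_A admits a complex structure. -/

import Mathlib

open Matrix Module

noncomputable section

/-- The `n × n` real nilpotent Jordan block `𝒥ₙ`, with `1`s on the subdiagonal
and `0`s elsewhere. -/
def jordanBlock (n : ℕ) : Matrix (Fin n) (Fin n) ℝ :=
  Matrix.of fun i j => if (i : ℕ) = (j : ℕ) + 1 then 1 else 0

/-- Two square real matrices with the same index type are conjugate: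
`B = P * A * P⁻¹` for some invertible `P`. -/
def MatConj {ι : Type*} [Fintype ι] [DecidableEq ι] (A B : Matrix ι ι ℝ) : Prop :=
  ∃ P : Matrix ι ι ℝ, IsUnit P ∧ B = P * A * P⁻¹

/-- Conjugacy of square real matrices indexed by possibly different (equipotent)
index types: after relabelling the rows/columns of `A` by a bijection, the two
matrices are conjugate. -/
def MatConj' {ι κ : Type*} [Fintype ι] [DecidableEq ι] [Fintype κ] [DecidableEq κ]
    (A : Matrix ι ι ℝ) (B : Matrix κ κ ℝ) : Prop :=
  ∃ e : ι ≃ κ, MatConj (Matrix.reindex e e A) B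

/-- The Lie bracket of the almost abelian Lie algebra `𝔤_A = ℝe₀ ⋉_A ℝ^ι`, on the
underlying vector space `ℝ × (ι → ℝ)`:  `[(t,v),(s,w)] = (0, t • A w − s • A v)`. -/
def aaBracket {ι : Type*} [Fintype ι] (A : Matrix ι ι ℝ) :
    ℝ × (ι → ℝ) → ℝ × (ι → ℝ) → ℝ × (ι → ℝ) :=
  fun x y => (0, x.1 • A.mulVec y.2 - y.1 • A.mulVec x.2)

/-- The almost abelian Lie algebra `𝔤_A` admits a complex structure: a linear
endomorphism `j` with `j² = -id` whose Nijenhuis tensor vanishes. -/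
def HasComplexStructure {ι : Type*} [Fintype ι] (A : Matrix ι ι ℝ) : Prop :=
  ∃ j : (ℝ × (ι → ℝ)) →ₗ[ℝ] ℝ × (ι → ℝ),
    (∀ x, j (j x) = -x) ∧
    (∀ x y, aaBracket A x y + j (aaBracket A (j x) y + aaBracket A x (j y))
        - aaBracket A (j x) (j y) = 0)

/-- The almost abelian Lie algebra `𝔤_A` admits a symplectic structure: a
non-degenerate alternating bilinear form which is closed. -/
def HasSymplecticStructure {ι : Type*} [Fintype ι] (A : Matrix ι ι ℝ) : Prop :=
  ∃ ω : (ℝ × (ι → ℝ)) →ₗ[ℝ] (ℝ × (ι → ℝ)) →ₗ[ℝ] ℝ,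
    (∀ x, ω x x = 0) ∧
    (∀ x, (∀ y, ω x y = 0) → x = 0) ∧
    (∀ x y z, ω (aaBracket A x y) z + ω (aaBracket A y z) x + ω (aaBracket A z x) y = 0)

set_option synthInstance.maxHeartbeats 1000000
set_option maxHeartbeats 2000000
set_option linter.unreachableTactic false
set_option linter.unusedTactic false

def jmap {ι : Type*} [Fintype ι] (u : ι → ℝ) (φ : (ι → ℝ) →ₗ[ℝ] ℝ)
    (J : (ι → ℝ) →ₗ[ℝ] (ι → ℝ)) : (ℝ × (ι → ℝ)) →ₗ[ℝ] ℝ × (ι → ℝ) where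
  toFun x := (-(φ x.2), x.1 • u + J x.2)
  map_add' x y := by
    ext <;> simp [add_smul] <;> ring_nf <;> try module
  map_smul' c x := by
    ext <;> simp [smul_smul, mul_comm] <;> try module

lemma suff {ι : Type*} [Fintype ι] (A : Matrix ι ι ℝ) (u : ι → ℝ)
    (φ : (ι → ℝ) →ₗ[ℝ] ℝ) (J : (ι → ℝ) →ₗ[ℝ] (ι → ℝ))
    (h1 : φ u = 1) (h2 : J u = 0)
    (h3 : ∀ v, φ (J v) = 0)
    (h4 : ∀ v, J (J v) = -v + φ v • u)
    (h5 : ∀ v, φ (A.mulVec v) = 0)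
    (h6 : ∀ w, A.mulVec w + J (A.mulVec (J w)) = φ w • A.mulVec u)
    (h7 : ∀ v w, φ v • (A.mulVec (J w) - J (A.mulVec w))
        = φ w • (A.mulVec (J v) - J (A.mulVec v))) :
    HasComplexStructure A := by
  refine ⟨jmap u φ J, ?_, ?_⟩
  · rintro ⟨t, v⟩
    have : J (J v) = -v + φ v • u := h4 v
    simp [jmap, h1, h2, h3, this]
  · rintro ⟨t, v⟩ ⟨s, w⟩
    have e6w : J (A.mulVec (J w)) = φ w • A.mulVec u - A.mulVec w := by
      have := h6 w; rw [add_comm] at this; exact eq_sub_of_add_eq this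
    have e6v : J (A.mulVec (J v)) = φ v • A.mulVec u - A.mulVec v := by
      have := h6 v; rw [add_comm] at this; exact eq_sub_of_add_eq this
    have e7 := h7 v w
    simp only [jmap, aaBracket, LinearMap.coe_mk, AddHom.coe_mk, Prod.mk_add_mk,
      Prod.mk_sub_mk, smul_sub, smul_smul, zero_smul, smul_zero,
      Matrix.mulVec_add, Matrix.mulVec_sub, Matrix.mulVec_smul,
      map_add, map_sub, _root_.map_smul, map_neg, neg_smul, smul_add, smul_neg,
      Prod.fst_zero, Prod.snd_zero, Prod.ext_iff]
    constructor
    · simp [h5]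
    · funext idx
      have E6w := congrFun e6w idx
      have E6v := congrFun e6v idx
      have E7 := congrFun e7 idx
      simp only [Pi.add_apply, Pi.sub_apply, Pi.smul_apply, Pi.neg_apply,
        Pi.zero_apply, smul_eq_mul] at E6w E6v E7 ⊢
      ring_nf
      ring_nf at E6w E6v E7
      linear_combination t * E6w - s * E6v + E7

lemma exists_adapted_basis {d : ℕ} (f : (Fin d → ℝ) →ₗ[ℝ] (Fin d → ℝ))
    (hf2 : ∀ v, f (f v) = 0) :
    ∃ (r m : ℕ) (E : Basis (Fin r ⊕ (Fin r ⊕ Fin m)) ℝ (Fin d → ℝ)),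
      r = finrank ℝ (LinearMap.range f) ∧ d = 2 * r + m ∧
      (∀ i, f (E (Sum.inl i)) = E (Sum.inr (Sum.inl i))) ∧
      (∀ x, f (E (Sum.inr x)) = 0) := by
  classical
  set p := LinearMap.range f with hp
  set q := LinearMap.ker f with hq
  have hpq : p ≤ q := by
    rintro x ⟨v, rfl⟩
    exact hf2 v
  set r := finrank ℝ p with hr
  -- complement of q in V
  obtain ⟨U, hU⟩ := Submodule.exists_isCompl q
  -- copy of p inside q, and complement inside q
  set p' : Submodule ℝ q := p.comap q.subtype with hp'
  obtain ⟨W, hW⟩ := Submodule.exists_isCompl p'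
  let ep' : p' ≃ₗ[ℝ] p := Submodule.comapSubtypeEquivOfLe hpq
  -- dimension bookkeeping
  have hrk : r + finrank ℝ q = d := by
    simpa using LinearMap.finrank_range_add_finrank_ker f
  have hrp' : finrank ℝ p' = r := ep'.finrank_eq
  have hWrank : finrank ℝ p' + finrank ℝ W = finrank ℝ q :=
    Submodule.finrank_add_eq_of_isCompl hW
  set m := finrank ℝ W with hm
  have hd : d = 2 * r + m := by omega
  -- the linear equivalence U ≃ p given by f
  have hinj : ∀ x : U, f (x : Fin d → ℝ) = 0 → x = 0 := by
    intro x hx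
    have hxq : (x : Fin d → ℝ) ∈ q := hx
    have : (x : Fin d → ℝ) ∈ q ⊓ U := ⟨hxq, x.2⟩
    rw [hU.inf_eq_bot] at this
    exact Subtype.ext (by simpa using this)
  let gl : U →ₗ[ℝ] p := LinearMap.codRestrict p (f.comp U.subtype)
    (fun x => ⟨(x : Fin d → ℝ), rfl⟩)
  have hgl : Function.Bijective gl := by
    constructor
    · intro x y hxy
      have : f (x : Fin d → ℝ) = f (y : Fin d → ℝ) := congrArg Subtype.val hxy
      have : f ((x : Fin d → ℝ) - (y : Fin d → ℝ)) = 0 := by rw [map_sub, this, sub_self]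
      have := hinj (x - y) (by simpa using this)
      simpa [sub_eq_zero] using this
    · rintro ⟨y, v, rfl⟩
      obtain ⟨vq, vU, hvq, hvU, rfl⟩ := Submodule.codisjoint_iff_exists_add_eq.mp hU.codisjoint v
      refine ⟨⟨vU, hvU⟩, ?_⟩
      ext
      simp [gl, map_add, (LinearMap.mem_ker.mp hvq)]
      rfl
  let g : U ≃ₗ[ℝ] p := LinearEquiv.ofBijective gl hgl
  -- bases
  let bp : Basis (Fin r) ℝ p := finBasis ℝ p
  let bU : Basis (Fin r) ℝ U := bp.map g.symm
  let bp' : Basis (Fin r) ℝ p' := bp.map ep'.symm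
  letI : Module.Free ℝ W := Module.Free.of_divisionRing ℝ W
  let bW : Basis (Fin m) ℝ W := finBasis ℝ W
  let basisq : Basis (Fin r ⊕ Fin m) ℝ q :=
    (bp'.prod bW).map (Submodule.prodEquivOfIsCompl p' W hW)
  let E : Basis (Fin r ⊕ (Fin r ⊕ Fin m)) ℝ (Fin d → ℝ) :=
    (bU.prod basisq).map (Submodule.prodEquivOfIsCompl U q hU.symm)
  refine ⟨r, m, E, rfl, hd, ?_, ?_⟩
  · intro i
    have h1 : (E (Sum.inl i) : Fin d → ℝ) = (bU i : Fin d → ℝ) := by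
      simp [E, Basis.prod_apply, Submodule.coe_prodEquivOfIsCompl]
    have h2 : (E (Sum.inr (Sum.inl i)) : Fin d → ℝ) = ((basisq (Sum.inl i) : q) : Fin d → ℝ) := by
      simp [E, Basis.prod_apply, Submodule.coe_prodEquivOfIsCompl]
    have h3 : ((basisq (Sum.inl i) : q) : Fin d → ℝ) = ((bp' i : q) : Fin d → ℝ) := by
      simp [basisq, Basis.prod_apply, Submodule.coe_prodEquivOfIsCompl]
    have h4 : ((bp' i : q) : Fin d → ℝ) = (bp i : Fin d → ℝ) := by
      have h := Submodule.comapSubtypeEquivOfLe_apply_coe hpq (ep'.symm (bp i))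
      simp only [bp', Basis.map_apply]
      simpa [ep'] using h.symm
    have h5 : f (bU i : Fin d → ℝ) = (bp i : Fin d → ℝ) := by
      have : gl (bU i) = bp i := by
        simp [bU, g]
      have := congrArg Subtype.val this
      exact this
    rw [h1, h2, h3, h4, h5]
  · intro x
    have : (E (Sum.inr x) : Fin d → ℝ) = ((basisq x : q) : Fin d → ℝ) := by
      simp [E, Basis.prod_apply, Submodule.coe_prodEquivOfIsCompl]
    rw [this]
    exact (basisq x).2

abbrev Idx1 (s t : ℕ) : Type :=
  (Unit ⊕ Fin s × Bool) ⊕ ((Unit ⊕ Fin s × Bool) ⊕ (Unit ⊕ Fin t × Bool))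

def Jval1 {d s t : ℕ} (E : Basis (Idx1 s t) ℝ (Fin d → ℝ)) : Idx1 s t → (Fin d → ℝ)
  | .inl (.inl _) => 0
  | .inl (.inr (j, false)) => E (.inl (.inr (j, true)))
  | .inl (.inr (j, true)) => -E (.inl (.inr (j, false)))
  | .inr (.inl (.inl _)) => E (.inr (.inr (.inl ())))
  | .inr (.inl (.inr (j, false))) => E (.inr (.inl (.inr (j, true))))
  | .inr (.inl (.inr (j, true))) => -E (.inr (.inl (.inr (j, false))))
  | .inr (.inr (.inl _)) => -E (.inr (.inl (.inl ())))
  | .inr (.inr (.inr (j, false))) => E (.inr (.inr (.inr (j, true))))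
  | .inr (.inr (.inr (j, true))) => -E (.inr (.inr (.inr (j, false))))

lemma case1 {d s t : ℕ} (A : Matrix (Fin d) (Fin d) ℝ)
    (E : Basis (Idx1 s t) ℝ (Fin d → ℝ))
    (H1 : ∀ x, A.mulVec (E (Sum.inl x)) = E (Sum.inr (Sum.inl x)))
    (H2 : ∀ y, A.mulVec (E (Sum.inr y)) = 0) :
    HasComplexStructure A := by
  classical
  set i₀ : Idx1 s t := .inl (.inl ()) with hi₀
  set φ := E.coord i₀ with hφ
  set J := E.constr ℝ (Jval1 E) with hJdef
  set u := E i₀ with hu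
  have hJ : ∀ i, J (E i) = Jval1 E i := fun i => E.constr_basis ℝ (Jval1 E) i
  have hφE : ∀ i, φ (E i) = if i = i₀ then 1 else 0 := by
    intro i
    simp [hφ, Basis.coord_apply, Basis.repr_self, Finsupp.single_apply]
  -- linearized hypotheses
  have Hf1 : ∀ x, A.mulVecLin (E (Sum.inl x)) = E (Sum.inr (Sum.inl x)) := by
    simpa using H1
  have Hf2 : ∀ y, A.mulVecLin (E (Sum.inr y)) = 0 := by simpa using H2
  have h5' : φ.comp A.mulVecLin = 0 := by
    apply Basis.ext E
    rintro (x | y) <;>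
      simp [H1, H2, hφE, hi₀, Matrix.mulVecLin_apply]
  have h3' : φ.comp J = 0 := by
    apply Basis.ext E
    rintro i
    rcases i with ((_|⟨j,(_|_)⟩)|((_|⟨j,(_|_)⟩)|(_|⟨j,(_|_)⟩))) <;>
      simp [hJ, Jval1, hφE, hi₀]
  have h4' : J.comp J = φ.smulRight u - LinearMap.id := by
    apply Basis.ext E
    rintro i
    rcases i with ((_|⟨j,(_|_)⟩)|((_|⟨j,(_|_)⟩)|(_|⟨j,(_|_)⟩))) <;>
      simp [hJ, Jval1, hφE, hi₀, hu]
  have h6' : A.mulVecLin + J ∘ₗ A.mulVecLin ∘ₗ J = φ.smulRight (A.mulVec u) := by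
    apply Basis.ext E
    rintro i
    rcases i with ((_|⟨j,(_|_)⟩)|((_|⟨j,(_|_)⟩)|(_|⟨j,(_|_)⟩))) <;>
      simp [hJ, Jval1, hφE, hi₀, hu, H1, H2, Matrix.mulVecLin_apply, Matrix.mulVec_neg, map_neg]
  have h7' : A.mulVecLin ∘ₗ J - J ∘ₗ A.mulVecLin
      = φ.smulRight (-E (.inr (.inr (.inl ())))) := by
    apply Basis.ext E
    rintro i
    rcases i with ((_|⟨j,(_|_)⟩)|((_|⟨j,(_|_)⟩)|(_|⟨j,(_|_)⟩))) <;>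
      simp [hJ, Jval1, hφE, hi₀, hu, H1, H2, Matrix.mulVecLin_apply, Matrix.mulVec_neg, map_neg]
  apply suff A u φ J
  · simp [hφE, hi₀, hu]
  · simpa [Jval1] using hJ i₀
  · intro v
    have := LinearMap.congr_fun h3' v
    simpa using this
  · intro v
    have := LinearMap.congr_fun h4' v
    simp only [LinearMap.comp_apply, LinearMap.sub_apply, LinearMap.smulRight_apply,
      LinearMap.id_apply] at this
    rw [this]; module
  · intro v
    have := LinearMap.congr_fun h5' v
    simpa using this
  · intro w
    have := LinearMap.congr_fun h6' w
    simpa [Matrix.mulVecLin_apply] using this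
  · intro v w
    have hv := LinearMap.congr_fun h7' v
    have hw := LinearMap.congr_fun h7' w
    simp only [LinearMap.comp_apply, LinearMap.sub_apply, LinearMap.smulRight_apply,
      Matrix.mulVecLin_apply] at hv hw
    rw [hv, hw, smul_comm]

abbrev Idx2 (s t : ℕ) : Type :=
  (Fin s × Bool) ⊕ ((Fin s × Bool) ⊕ (Unit ⊕ Fin t × Bool))

def Jval2 {d s t : ℕ} (E : Basis (Idx2 s t) ℝ (Fin d → ℝ)) : Idx2 s t → (Fin d → ℝ)
  | .inl (j, false) => E (.inl (j, true))
  | .inl (j, true) => -E (.inl (j, false))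
  | .inr (.inl (j, false)) => E (.inr (.inl (j, true)))
  | .inr (.inl (j, true)) => -E (.inr (.inl (j, false)))
  | .inr (.inr (.inl _)) => 0
  | .inr (.inr (.inr (j, false))) => E (.inr (.inr (.inr (j, true))))
  | .inr (.inr (.inr (j, true))) => -E (.inr (.inr (.inr (j, false))))

lemma case2 {d s t : ℕ} (A : Matrix (Fin d) (Fin d) ℝ)
    (E : Basis (Idx2 s t) ℝ (Fin d → ℝ))
    (H1 : ∀ x, A.mulVec (E (Sum.inl x)) = E (Sum.inr (Sum.inl x)))
    (H2 : ∀ y, A.mulVec (E (Sum.inr y)) = 0) :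
    HasComplexStructure A := by
  classical
  set i₀ : Idx2 s t := .inr (.inr (.inl ())) with hi₀
  set φ := E.coord i₀ with hφ
  set J := E.constr ℝ (Jval2 E) with hJdef
  set u := E i₀ with hu
  have hJ : ∀ i, J (E i) = Jval2 E i := fun i => E.constr_basis ℝ (Jval2 E) i
  have hφE : ∀ i, φ (E i) = if i = i₀ then 1 else 0 := by
    intro i
    simp [hφ, Basis.coord_apply, Basis.repr_self, Finsupp.single_apply]
  have hu0 : A.mulVec u = 0 := by
    rw [hu, hi₀]; exact H2 _
  have h5' : φ.comp A.mulVecLin = 0 := by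
    apply Basis.ext E
    rintro (x | y) <;>
      simp [H1, H2, hφE, hi₀, Matrix.mulVecLin_apply]
  have h3' : φ.comp J = 0 := by
    apply Basis.ext E
    rintro i
    rcases i with (⟨j,(_|_)⟩|(⟨j,(_|_)⟩|(_|⟨j,(_|_)⟩))) <;>
      simp [hJ, Jval2, hφE, hi₀]
  have h4' : J.comp J = φ.smulRight u - LinearMap.id := by
    apply Basis.ext E
    rintro i
    rcases i with (⟨j,(_|_)⟩|(⟨j,(_|_)⟩|(_|⟨j,(_|_)⟩))) <;>
      simp [hJ, Jval2, hφE, hi₀, hu]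
  have h6' : A.mulVecLin + J ∘ₗ A.mulVecLin ∘ₗ J = φ.smulRight (A.mulVec u) := by
    apply Basis.ext E
    rintro i
    rcases i with (⟨j,(_|_)⟩|(⟨j,(_|_)⟩|(_|⟨j,(_|_)⟩))) <;>
      simp [hJ, Jval2, hφE, hi₀, hu, H1, H2, Matrix.mulVecLin_apply, Matrix.mulVec_neg, map_neg]
  have h7' : A.mulVecLin ∘ₗ J - J ∘ₗ A.mulVecLin = 0 := by
    apply Basis.ext E
    rintro i
    rcases i with (⟨j,(_|_)⟩|(⟨j,(_|_)⟩|(_|⟨j,(_|_)⟩))) <;>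
      simp [hJ, Jval2, hφE, hi₀, hu, H1, H2, Matrix.mulVecLin_apply, Matrix.mulVec_neg, map_neg]
  apply suff A u φ J
  · simp [hφE, hi₀, hu]
  · simpa [Jval2] using hJ i₀
  · intro v
    have := LinearMap.congr_fun h3' v
    simpa using this
  · intro v
    have := LinearMap.congr_fun h4' v
    simp only [LinearMap.comp_apply, LinearMap.sub_apply, LinearMap.smulRight_apply,
      LinearMap.id_apply] at this
    rw [this]; module
  · intro v
    have := LinearMap.congr_fun h5' v
    simpa using this
  · intro w
    have := LinearMap.congr_fun h6' w
    simpa [Matrix.mulVecLin_apply] using this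
  · intro v w
    have hv := LinearMap.congr_fun h7' v
    have hw := LinearMap.congr_fun h7' w
    simp only [LinearMap.comp_apply, LinearMap.sub_apply, LinearMap.zero_apply,
      Matrix.mulVecLin_apply, sub_eq_zero] at hv hw
    rw [hv, hw]
    simp

/-- If `A ∈ M(2n-1,ℝ)` satisfies `A ≠ 0` and `A² = 0` (so `𝔤_A`
is 2-step nilpotent), then `𝔤_A` admits a complex structure. -/

theorem stmt8 (n : ℕ)
    (A : Matrix (Fin (2 * n - 1)) (Fin (2 * n - 1)) ℝ)
    (hA : A ≠ 0) (hA2 : A ^ 2 = 0) :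
    HasComplexStructure A := by
  classical
  rcases Nat.eq_zero_or_pos n with rfl | hn
  · exfalso; apply hA; ext i j; exact i.elim0
  have hdodd : (2 * n - 1) % 2 = 1 := by omega
  have hf2 : ∀ v, A.mulVecLin (A.mulVecLin v) = 0 := by
    intro v
    have : A * A = 0 := by rw [← pow_two]; exact hA2
    simp [Matrix.mulVecLin_apply, Matrix.mulVec_mulVec, this]
  obtain ⟨r, m, E, hr, hd, HE1, HE2⟩ := exists_adapted_basis A.mulVecLin hf2
  have HE1' : ∀ i, A.mulVec (E (Sum.inl i)) = E (Sum.inr (Sum.inl i)) := by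
    intro i; have := HE1 i; simpa [Matrix.mulVecLin_apply] using this
  have HE2' : ∀ x, A.mulVec (E (Sum.inr x)) = 0 := by
    intro x; have := HE2 x; simpa [Matrix.mulVecLin_apply] using this
  have hmodd : m % 2 = 1 := by omega
  obtain ⟨t, ht⟩ : ∃ t, m = 2 * t + 1 := ⟨m / 2, by omega⟩
  have e₂ : Fin m ≃ (Unit ⊕ Fin t × Bool) :=
    Fintype.equivOfCardEq (by simp [ht]; omega)
  rcases Nat.even_or_odd r with ⟨s, hs⟩ | ⟨s, hs⟩
  · -- r even
    have e₁ : Fin r ≃ (Fin s × Bool) := Fintype.equivOfCardEq (by simp; omega)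
    let E' := E.reindex (Equiv.sumCongr e₁ (Equiv.sumCongr e₁ e₂))
    apply case2 A E'
    · intro x
      simp only [E', Basis.reindex_apply, Equiv.sumCongr_symm, Equiv.sumCongr_apply,
        Sum.map_inl, Sum.map_inr]
      exact HE1' (e₁.symm x)
    · rintro (y | y) <;>
        simp only [E', Basis.reindex_apply, Equiv.sumCongr_symm, Equiv.sumCongr_apply,
          Sum.map_inl, Sum.map_inr] <;>
        apply HE2'
  · -- r odd
    have e₁ : Fin r ≃ (Unit ⊕ Fin s × Bool) := Fintype.equivOfCardEq (by simp; omega)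
    let E' := E.reindex (Equiv.sumCongr e₁ (Equiv.sumCongr e₁ e₂))
    apply case1 A E'
    · intro x
      simp only [E', Basis.reindex_apply, Equiv.sumCongr_symm, Equiv.sumCongr_apply,
        Sum.map_inl, Sum.map_inr]
      exact HE1' (e₁.symm x)
    · rintro (y | y) <;>
        simp only [E', Basis.reindex_apply, Equiv.sumCongr_symm, Equiv.sumCongr_apply,
          Sum.map_inl, Sum.map_inr] <;>
        apply HE2'
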